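/- For every n ≥ 4, in the target group G_D(n), define e_{ij} := (i j)·t_{ij} for each pair of distinct indices i, j in {1,…,n}, where (i j) denotes the image of the transposition. Then the e_{ij} generate an elementary abelian 2-group: each e_{ij} satisfies e_{ij}² = 1, and e_{ij}·e_{kl} = e_{kl}·e_{ij} for all pairs {i,j} and {k,l} of distinct indices (whether or not the pairs intersect). -/
import Mathlib


open Monoid Pointwise

/-- The type of `k`-element subsets of `Fin n`. -/
abbrev KSub (n k : ℕ) := {s : Finset (Fin n) // s.card = k}

/-- The free product of copies of `ℤ/2ℤ` indexed by the `k`-element subsets of `Fin n`. -/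
abbrev FP (n k : ℕ) := Monoid.CoprodI (fun _ : KSub n k => Multiplicative (ZMod 2))

/-- The symmetric generator `t_S`. -/
def tFP {n k : ℕ} (S : KSub n k) : FP n k :=
  Monoid.CoprodI.of (i := S) (Multiplicative.ofAdd (1 : ZMod 2))

/-- The action of a permutation of `Fin n` on the `k`-element subsets. -/
instance KSub.instMulAction (n k : ℕ) : MulAction (Equiv.Perm (Fin n)) (KSub n k) where
  smul σ S := ⟨σ • S.1, by rw [Finset.card_smul_finset]; exact S.2⟩
  one_smul S := Subtype.ext (one_smul _ S.1)
  mul_smul σ τ S := Subtype.ext (mul_smul σ τ S.1)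

/-- The endomorphism of the free product induced by a permutation of `Fin n`. -/
def fpHom {n k : ℕ} (σ : Equiv.Perm (Fin n)) : FP n k →* FP n k :=
  Monoid.CoprodI.lift (fun S => Monoid.CoprodI.of (M := fun _ : KSub n k => Multiplicative (ZMod 2)) (i := σ • S))

lemma fpHom_comp {n k : ℕ} (σ τ : Equiv.Perm (Fin n)) :
    (fpHom (n := n) (k := k) σ).comp (fpHom τ) = fpHom (σ * τ) := by
  apply Monoid.CoprodI.ext_hom
  intro S
  ext x
  simp [fpHom, Monoid.CoprodI.lift_of, mul_smul]

lemma fpHom_one {n k : ℕ} : fpHom (n := n) (k := k) 1 = MonoidHom.id _ := by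
  apply Monoid.CoprodI.ext_hom
  intro S
  ext x
  simp [fpHom, Monoid.CoprodI.lift_of]

/-- The action of `Sym(Fin n)` on the free product, permuting the free factors. -/
def fpAut (n k : ℕ) : Equiv.Perm (Fin n) →* MulAut (FP n k) :=
  MonoidHom.mk' (fun σ =>
    { toFun := fpHom σ
      invFun := fpHom σ⁻¹
      left_inv := fun x => by
        have h := fpHom_comp (n := n) (k := k) σ⁻¹ σ
        rw [inv_mul_cancel, fpHom_one] at h
        exact DFunLike.congr_fun h x
      right_inv := fun x => by
        have h := fpHom_comp (n := n) (k := k) σ σ⁻¹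
        rw [mul_inv_cancel, fpHom_one] at h
        exact DFunLike.congr_fun h x
      map_mul' := map_mul _ })
    (fun σ τ => by
      ext x
      exact (DFunLike.congr_fun (fpHom_comp (n := n) (k := k) σ τ) x).symm)

/-- The progenitor `2^{⋆C(n,k)} : Sₙ`. -/
abbrev Progenitor (n k : ℕ) := FP n k ⋊[fpAut n k] Equiv.Perm (Fin n)

/-- The target group: the quotient of the progenitor by the normal closure of the
single relator `(t_{S₀}·σ₀)³`. -/
abbrev TargetGroup (n k : ℕ) (S₀ : KSub n k) (σ₀ : Equiv.Perm (Fin n)) :=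
  Progenitor n k ⧸ Subgroup.normalClosure
    {(SemidirectProduct.inl (tFP S₀) * SemidirectProduct.inr σ₀) ^ 3}

/-- The image in the target group of the symmetric generator `t_S`. -/
def tbar {n k : ℕ} (S₀ : KSub n k) (σ₀ : Equiv.Perm (Fin n)) (S : KSub n k) :
    TargetGroup n k S₀ σ₀ :=
  QuotientGroup.mk (SemidirectProduct.inl (tFP S))

/-- The canonical map from the control group `Sₙ` to the target group. -/
def pbar {n k : ℕ} (S₀ : KSub n k) (σ₀ : Equiv.Perm (Fin n)) :
    Equiv.Perm (Fin n) →* TargetGroup n k S₀ σ₀ :=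
  (QuotientGroup.mk' _).comp (SemidirectProduct.inr)

/-- The subset `{1, 2}` (0-based: `{0, 1}`) of `Fin n`. -/
def S12 (n : ℕ) (hn : 4 ≤ n) : KSub n 2 :=
  ⟨{⟨0, by omega⟩, ⟨1, by omega⟩}, Finset.card_pair (by simp [Fin.ext_iff])⟩

/-- The transposition `(2 3)` (0-based: `(1 2)`) of `Fin n`. -/
def σD (n : ℕ) (hn : 4 ≤ n) : Equiv.Perm (Fin n) :=
  Equiv.swap ⟨1, by omega⟩ ⟨2, by omega⟩

/-- The target group `G_D(n)`, obtained by factoring the progenitor `2^{⋆C(n,2)} : Sₙ`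
by the single relator `(t_{12}·(2 3))³`. -/
abbrev GD (n : ℕ) (hn : 4 ≤ n) := TargetGroup n 2 (S12 n hn) (σD n hn)

/-- The symmetric generator `t_{ij}` of `G_D(n)`. -/
def tD {n : ℕ} (hn : 4 ≤ n) (i j : Fin n) (h : i ≠ j) : GD n hn :=
  tbar (S12 n hn) (σD n hn) ⟨{i, j}, Finset.card_pair h⟩

/-- The canonical map from the control group `Sₙ` to `G_D(n)`. -/
def pD {n : ℕ} (hn : 4 ≤ n) : Equiv.Perm (Fin n) →* GD n hn :=
  pbar (S12 n hn) (σD n hn)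

/-- The element `e_{ij} := (i j)·t_{ij}` of `G_D(n)`. -/
def eD {n : ℕ} (hn : 4 ≤ n) (i j : Fin n) (h : i ≠ j) : GD n hn :=
  pD hn (Equiv.swap i j) * tD hn i j h

section Aux

open SemidirectProduct Equiv

variable {n : ℕ} (hn : 4 ≤ n)

lemma fpAut_tFP (σ : Equiv.Perm (Fin n)) (S : KSub n 2) :
    fpAut n 2 σ (tFP S) = tFP (σ • S) := by
  show fpHom σ (tFP S) = tFP (σ • S)
  simp [fpHom, tFP, Monoid.CoprodI.lift_of]

lemma ksub_smul_pair (σ : Equiv.Perm (Fin n)) (i j : Fin n) (h : i ≠ j) :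
    σ • (⟨{i, j}, Finset.card_pair h⟩ : KSub n 2)
      = ⟨{σ i, σ j}, Finset.card_pair (fun hc => h (σ.injective hc))⟩ := by
  apply Subtype.ext
  show σ • ({i, j} : Finset (Fin n)) = {σ i, σ j}
  rw [Finset.smul_finset_insert, Finset.smul_finset_singleton]
  rfl

lemma inr_mul_inl (σ : Equiv.Perm (Fin n)) (S : KSub n 2) :
    (inr σ : Progenitor n 2) * inl (tFP S) = inl (tFP (σ • S)) * inr σ := by
  rw [← fpAut_tFP, SemidirectProduct.inl_aut, mul_assoc, mul_assoc, ← map_mul]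
  simp

lemma tD_eq (i j : Fin n) (h : i ≠ j) :
    tD hn i j h = QuotientGroup.mk (inl (tFP (⟨{i, j}, Finset.card_pair h⟩ : KSub n 2))) := rfl

lemma pD_eq (σ : Equiv.Perm (Fin n)) :
    pD hn σ = QuotientGroup.mk (inr σ : Progenitor n 2) := rfl

lemma tD_congr {i j i' j' : Fin n} (h : i ≠ j) (hi : i = i') (hj : j = j') (h' : i' ≠ j') :
    tD hn i j h = tD hn i' j' h' := by subst hi; subst hj; rfl

lemma tD_symm (i j : Fin n) (h : i ≠ j) : tD hn i j h = tD hn j i h.symm := by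
  unfold tD tbar
  congr 1
  exact congrArg (fun S => SemidirectProduct.inl (tFP S)) (Subtype.ext (Finset.pair_comm i j))

lemma pD_mul_tD (σ : Equiv.Perm (Fin n)) (i j : Fin n) (h : i ≠ j) :
    pD hn σ * tD hn i j h
      = tD hn (σ i) (σ j) (fun hc => h (σ.injective hc)) * pD hn σ := by
  rw [tD_eq, tD_eq, pD_eq, ← QuotientGroup.mk_mul, ← QuotientGroup.mk_mul,
    ← ksub_smul_pair, inr_mul_inl]
  exact h

lemma tD_sq (i j : Fin n) (h : i ≠ j) : tD hn i j h * tD hn i j h = 1 := by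
  rw [tD_eq, ← QuotientGroup.mk_mul, ← map_mul]
  have : tFP (⟨{i, j}, Finset.card_pair h⟩ : KSub n 2)
      * tFP (⟨{i, j}, Finset.card_pair h⟩ : KSub n 2) = 1 := by
    rw [tFP, ← map_mul, ← ofAdd_add, show (1 + 1 : ZMod 2) = 0 from rfl, ofAdd_zero, map_one]
  rw [this, map_one, QuotientGroup.mk_one]

lemma pD_sq (i j : Fin n) : pD hn (Equiv.swap i j) * pD hn (Equiv.swap i j) = 1 := by
  rw [← map_mul, Equiv.swap_mul_self, map_one]

/-- abstract manipulation -/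
lemma abstract_rel {G : Type*} [Group G] (T T₂ P : G)
    (hPT : P * T = T₂ * P) (hPT₂ : P * T₂ = T * P) (hP2 : P * P = 1)
    (hrel : (T * P) ^ 3 = 1) : T * T₂ * T = P⁻¹ := by
  have key : (T * P) ^ 3 = T * T₂ * T * P := by
    calc (T * P) ^ 3 = T * (P * T) * (P * T) * P := by
          rw [pow_succ, pow_succ, pow_one]; simp [mul_assoc]
    _ = T * (T₂ * P) * (T₂ * P) * P := by rw [hPT]
    _ = T * T₂ * (P * T₂) * (P * P) := by group
    _ = T * T₂ * (T * P) * 1 := by rw [hPT₂, hP2]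
    _ = T * T₂ * T * P := by group
  rw [key] at hrel
  rw [eq_inv_iff_mul_eq_one]
  exact hrel

end Aux

private def y0 {n : ℕ} (hn : 4 ≤ n) : Fin n := ⟨0, by omega⟩
private def y1 {n : ℕ} (hn : 4 ≤ n) : Fin n := ⟨1, by omega⟩
private def y2 {n : ℕ} (hn : 4 ≤ n) : Fin n := ⟨2, by omega⟩

private lemma y01 {n : ℕ} (hn : 4 ≤ n) : y0 hn ≠ y1 hn := by simp [y0, y1, Fin.ext_iff]
private lemma y02 {n : ℕ} (hn : 4 ≤ n) : y0 hn ≠ y2 hn := by simp [y0, y2, Fin.ext_iff]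
private lemma y12 {n : ℕ} (hn : 4 ≤ n) : y1 hn ≠ y2 hn := by simp [y1, y2, Fin.ext_iff]

section Aux2

variable {n : ℕ} (hn : 4 ≤ n)

lemma relator_one :
    ((QuotientGroup.mk ((SemidirectProduct.inl (tFP (S12 n hn))
        * SemidirectProduct.inr (σD n hn)) ^ 3)) : GD n hn) = 1 := by
  rw [QuotientGroup.eq_one_iff]
  exact Subgroup.subset_normalClosure (Set.mem_singleton _)

lemma base_rel :
    tD hn (y0 hn) (y1 hn) (y01 hn) * tD hn (y0 hn) (y2 hn) (y02 hn)
        * tD hn (y0 hn) (y1 hn) (y01 hn)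
      = pD hn (Equiv.swap (y1 hn) (y2 hn)) := by
  have hσ : σD n hn = Equiv.swap (y1 hn) (y2 hn) := rfl
  have hs0 : (σD n hn) (y0 hn) = y0 hn := by
    rw [hσ]; exact Equiv.swap_apply_of_ne_of_ne (y01 hn) (y02 hn)
  have hs1 : (σD n hn) (y1 hn) = y2 hn := by rw [hσ]; exact Equiv.swap_apply_left _ _
  have hs2 : (σD n hn) (y2 hn) = y1 hn := by rw [hσ]; exact Equiv.swap_apply_right _ _
  have hrel : (tD hn (y0 hn) (y1 hn) (y01 hn) * pD hn (σD n hn)) ^ 3 = 1 := by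
    have h := relator_one hn
    rw [QuotientGroup.mk_pow, QuotientGroup.mk_mul] at h
    exact h
  have hPT : pD hn (σD n hn) * tD hn (y0 hn) (y1 hn) (y01 hn)
      = tD hn (y0 hn) (y2 hn) (y02 hn) * pD hn (σD n hn) := by
    rw [pD_mul_tD, tD_congr hn _ hs0 hs1 (y02 hn)]
  have hPT₂ : pD hn (σD n hn) * tD hn (y0 hn) (y2 hn) (y02 hn)
      = tD hn (y0 hn) (y1 hn) (y01 hn) * pD hn (σD n hn) := by
    rw [pD_mul_tD, tD_congr hn _ hs0 hs2 (y01 hn)]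
  have hP2 : pD hn (σD n hn) * pD hn (σD n hn) = 1 := pD_sq hn (y1 hn) (y2 hn)
  rw [abstract_rel _ _ _ hPT hPT₂ hP2 hrel, ← map_inv]
  exact congrArg (pD hn) (by rw [hσ, Equiv.swap_inv])

lemma exists_perm (x0 x1 x2 a b c : Fin n) (h01 : x0 ≠ x1) (h02 : x0 ≠ x2) (h12 : x1 ≠ x2)
    (hab : a ≠ b) (hac : a ≠ c) (hbc : b ≠ c) :
    ∃ σ : Equiv.Perm (Fin n), σ x0 = a ∧ σ x1 = b ∧ σ x2 = c := by
  set σ1 := Equiv.swap x0 a with hσ1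
  set b' := σ1.symm b with hb'
  set σ2 := Equiv.swap x1 b' with hσ2
  set c' := σ2.symm (σ1.symm c) with hc'
  set σ3 := Equiv.swap x2 c' with hσ3
  have hb'0 : b' ≠ x0 := by
    intro h
    apply hab
    have := congrArg σ1 h
    rw [hb', Equiv.apply_symm_apply, hσ1, Equiv.swap_apply_left] at this
    exact this.symm
  have h20 : σ2 x0 = x0 := Equiv.swap_apply_of_ne_of_ne h01 (Ne.symm hb'0)
  have hc'0 : c' ≠ x0 := by
    intro h
    apply hac
    have := congrArg (fun z => σ1 (σ2 z)) h
    simp only [hc', Equiv.apply_symm_apply] at this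
    rw [h20, hσ1, Equiv.swap_apply_left] at this
    exact this.symm
  have hc'1 : c' ≠ x1 := by
    intro h
    apply hbc
    have := congrArg (fun z => σ1 (σ2 z)) h
    simp only [hc', Equiv.apply_symm_apply] at this
    rw [hσ2, Equiv.swap_apply_left, hb', Equiv.apply_symm_apply] at this
    exact this.symm
  refine ⟨σ1 * σ2 * σ3, ?_, ?_, ?_⟩
  · show σ1 (σ2 (σ3 x0)) = a
    rw [hσ3, Equiv.swap_apply_of_ne_of_ne h02 (Ne.symm hc'0), h20, hσ1, Equiv.swap_apply_left]
  · show σ1 (σ2 (σ3 x1)) = b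
    rw [hσ3, Equiv.swap_apply_of_ne_of_ne h12 (Ne.symm hc'1), hσ2, Equiv.swap_apply_left,
      hb', Equiv.apply_symm_apply]
  · show σ1 (σ2 (σ3 x2)) = c
    rw [hσ3, Equiv.swap_apply_left, hc', Equiv.apply_symm_apply, Equiv.apply_symm_apply]

lemma gen_rel (a b c : Fin n) (hab : a ≠ b) (hac : a ≠ c) (hbc : b ≠ c) :
    tD hn a b hab * tD hn a c hac * tD hn a b hab = pD hn (Equiv.swap b c) := by
  obtain ⟨σ, h0, h1, h2⟩ := exists_perm (y0 hn) (y1 hn) (y2 hn) a b c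
    (y01 hn) (y02 hn) (y12 hn) hab hac hbc
  set T := tD hn (y0 hn) (y1 hn) (y01 hn) with hT
  set T₂ := tD hn (y0 hn) (y2 hn) (y02 hn) with hT₂
  have c01 : pD hn σ * T * (pD hn σ)⁻¹ = tD hn a b hab := by
    rw [hT, pD_mul_tD, tD_congr hn _ h0 h1 hab, mul_assoc, mul_inv_cancel, mul_one]
  have c02 : pD hn σ * T₂ * (pD hn σ)⁻¹ = tD hn a c hac := by
    rw [hT₂, pD_mul_tD, tD_congr hn _ h0 h2 hac, mul_assoc, mul_inv_cancel, mul_one]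
  calc tD hn a b hab * tD hn a c hac * tD hn a b hab
      = (pD hn σ * T * (pD hn σ)⁻¹) * (pD hn σ * T₂ * (pD hn σ)⁻¹)
        * (pD hn σ * T * (pD hn σ)⁻¹) := by rw [c01, c02]
    _ = pD hn σ * (T * T₂ * T) * (pD hn σ)⁻¹ := by group
    _ = pD hn σ * pD hn (Equiv.swap (y1 hn) (y2 hn)) * (pD hn σ)⁻¹ := by rw [base_rel hn]
    _ = pD hn (σ * Equiv.swap (y1 hn) (y2 hn) * σ⁻¹) := by rw [map_mul, map_mul, map_inv]
    _ = pD hn (Equiv.swap b c) := by rw [← h1, ← h2, Equiv.swap_apply_apply]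

end Aux2

section Aux3

variable {n : ℕ} (hn : 4 ≤ n)

lemma eD_symm (i j : Fin n) (h : i ≠ j) : eD hn i j h = eD hn j i h.symm := by
  unfold eD
  rw [Equiv.swap_comm, tD_symm]

lemma eD_sq' (i j : Fin n) (h : i ≠ j) : eD hn i j h * eD hn i j h = 1 := by
  unfold eD
  have hc : pD hn (Equiv.swap i j) * tD hn i j h = tD hn i j h * pD hn (Equiv.swap i j) := by
    rw [pD_mul_tD, tD_congr hn _ (Equiv.swap_apply_left i j) (Equiv.swap_apply_right i j) h.symm,
      ← tD_symm]
  calc pD hn (Equiv.swap i j) * tD hn i j h * (pD hn (Equiv.swap i j) * tD hn i j h)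
      = pD hn (Equiv.swap i j) * (tD hn i j h * pD hn (Equiv.swap i j)) * tD hn i j h := by
        group
    _ = pD hn (Equiv.swap i j) * (pD hn (Equiv.swap i j) * tD hn i j h) * tD hn i j h := by
        rw [← hc]
    _ = (pD hn (Equiv.swap i j) * pD hn (Equiv.swap i j)) * (tD hn i j h * tD hn i j h) := by
        group
    _ = 1 := by rw [pD_sq, tD_sq, one_mul]

lemma mul_eD (a b c : Fin n) (hab : a ≠ b) (hac : a ≠ c) (hbc : b ≠ c) :
    eD hn a b hab * eD hn a c hac = eD hn b c hbc := by
  unfold eD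
  have s1 : tD hn a b hab * pD hn (Equiv.swap a c) = pD hn (Equiv.swap a c) * tD hn c b hbc.symm := by
    rw [pD_mul_tD, tD_congr hn _ (Equiv.swap_apply_right a c)
      (Equiv.swap_apply_of_ne_of_ne hab.symm hbc) hab]
  have s2 : tD hn c b hbc.symm * tD hn c a hac.symm = pD hn (Equiv.swap b a) * tD hn c b hbc.symm := by
    calc tD hn c b hbc.symm * tD hn c a hac.symm
        = tD hn c b hbc.symm * tD hn c a hac.symm * (tD hn c b hbc.symm * tD hn c b hbc.symm) := by
          rw [tD_sq, mul_one]
      _ = (tD hn c b hbc.symm * tD hn c a hac.symm * tD hn c b hbc.symm) * tD hn c b hbc.symm := by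
          group
      _ = pD hn (Equiv.swap b a) * tD hn c b hbc.symm := by
          rw [gen_rel hn c b a hbc.symm hac.symm (Ne.symm hab)]
  have s3 : Equiv.swap a b * Equiv.swap a c * Equiv.swap b a = Equiv.swap b c := by
    rw [Equiv.swap_comm b a, show Equiv.swap a b * Equiv.swap a c * Equiv.swap a b
      = Equiv.swap a b * Equiv.swap a c * (Equiv.swap a b)⁻¹ from by rw [Equiv.swap_inv],
      ← Equiv.swap_apply_apply, Equiv.swap_apply_left,
      Equiv.swap_apply_of_ne_of_ne hac.symm hbc.symm]
  calc pD hn (Equiv.swap a b) * tD hn a b hab * (pD hn (Equiv.swap a c) * tD hn a c hac)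
      = pD hn (Equiv.swap a b) * (tD hn a b hab * pD hn (Equiv.swap a c)) * tD hn c a hac.symm := by
        rw [tD_symm hn a c hac]; group
    _ = pD hn (Equiv.swap a b) * (pD hn (Equiv.swap a c) * tD hn c b hbc.symm) * tD hn c a hac.symm := by
        rw [s1]
    _ = pD hn (Equiv.swap a b) * pD hn (Equiv.swap a c) * (tD hn c b hbc.symm * tD hn c a hac.symm) := by
        group
    _ = pD hn (Equiv.swap a b) * pD hn (Equiv.swap a c) * (pD hn (Equiv.swap b a) * tD hn c b hbc.symm) := by
        rw [s2]
    _ = pD hn (Equiv.swap a b * Equiv.swap a c * Equiv.swap b a) * tD hn b c hbc := by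
        rw [map_mul, map_mul, ← tD_symm hn b c hbc]; group
    _ = pD hn (Equiv.swap b c) * tD hn b c hbc := by rw [s3]

lemma comm_shared (a b c : Fin n) (hab : a ≠ b) (hac : a ≠ c) (hbc : b ≠ c) :
    eD hn a b hab * eD hn a c hac = eD hn a c hac * eD hn a b hab := by
  rw [mul_eD hn a b c hab hac hbc, mul_eD hn a c b hac hab hbc.symm]
  exact eD_symm hn b c hbc

lemma comm_disjoint (a b c d : Fin n) (hab : a ≠ b) (hac : a ≠ c) (had : a ≠ d)
    (hbc : b ≠ c) (hbd : b ≠ d) (hcd : c ≠ d) :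
    eD hn a b hab * eD hn c d hcd = eD hn c d hcd * eD hn a b hab := by
  rw [← mul_eD hn a c d hac had hcd]
  calc eD hn a b hab * (eD hn a c hac * eD hn a d had)
      = (eD hn a b hab * eD hn a c hac) * eD hn a d had := by group
    _ = (eD hn a c hac * eD hn a b hab) * eD hn a d had := by rw [comm_shared hn a b c hab hac hbc]
    _ = eD hn a c hac * (eD hn a b hab * eD hn a d had) := by group
    _ = eD hn a c hac * (eD hn a d had * eD hn a b hab) := by rw [comm_shared hn a b d hab had hbd]
    _ = eD hn a c hac * eD hn a d had * eD hn a b hab := by group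

end Aux3

/-- For every `n ≥ 4`, the elements `e_{ij} := (i j)·t_{ij}` of `G_D(n)`
generate an elementary abelian 2-group: each satisfies `e_{ij}² = 1` and any two of them
commute (whether or not the index pairs intersect). -/
theorem targetGroup_D_e_elementary_abelian (n : ℕ) (hn : 4 ≤ n) :
    (∀ (i j : Fin n) (h : i ≠ j), eD hn i j h ^ 2 = 1) ∧
      ∀ (i j k l : Fin n) (hij : i ≠ j) (hkl : k ≠ l),
        eD hn i j hij * eD hn k l hkl = eD hn k l hkl * eD hn i j hij := by
  constructor
  · intro i j h
    rw [pow_two]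
    exact eD_sq' hn i j h
  · intro i j k l hij hkl
    by_cases hki : k = i
    · subst hki
      by_cases hlj : l = j
      · subst hlj
        rfl
      · exact comm_shared hn k j l hij hkl (fun h => hlj h.symm)
    · by_cases hkj : k = j
      · subst hkj
        by_cases hli : l = i
        · subst hli
          rw [eD_symm hn k l hkl]
        · rw [eD_symm hn i k hij]
          exact comm_shared hn k i l hij.symm hkl (fun h => hli h.symm)
      · by_cases hli : l = i
        · subst hli
          rw [eD_symm hn k l hkl]
          exact comm_shared hn l j k hij (Ne.symm hkl) (fun h => hkj h.symm)
        · by_cases hlj : l = j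
          · subst hlj
            rw [eD_symm hn i l hij, eD_symm hn k l hkl]
            exact comm_shared hn l i k hij.symm hkl.symm (fun h => hki h.symm)
          · exact comm_disjoint hn i j k l hij (fun h => hki h.symm) (fun h => hli h.symm)
              (fun h => hkj h.symm) (fun h => hlj h.symm) hkl
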